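/- Let G be a finite simple graph on n vertices that is neither complete nor edgeless. Then G is representable in ℝ^{n−2}: there exists f : V(G) → ℝ^{n−2} such that for all vertices x ≠ x' and y ≠ y', ‖f(x) − f(x')‖ = ‖f(y) − f(y')‖ if and only if ({x,x'} ∈ E(G) ↔ {y,y'} ∈ E(G)). -/

import Mathlib

open Matrix Finset

set_option linter.unusedSectionVars false
set_option maxHeartbeats 1000000

section Helpers
variable {V : Type*} [Fintype V] [DecidableEq V]

/-- standard basis vector -/
noncomputable def sbv (i : V) : V → ℝ := Pi.single i 1

lemma dot_single (A : Matrix V V ℝ) (i j : V) :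
    sbv i ⬝ᵥ A *ᵥ sbv j = A i j := by
  rw [sbv, sbv, Matrix.mulVec_single_one, single_dotProduct]
  simp

lemma symm_apply {A : Matrix V V ℝ} (hsymm : Aᵀ = A) (i j : V) : A j i = A i j := by
  conv_lhs => rw [← hsymm]
  rfl

lemma quad3 (A : Matrix V V ℝ) (hsymm : Aᵀ = A) (hdiag : ∀ i, A i i = 0)
    (a b c : ℝ) (p q r : V) :
    (a • sbv p + b • sbv q + c • sbv r) ⬝ᵥ A *ᵥ (a • sbv p + b • sbv q + c • sbv r)
    = 2*(a*b*A p q + a*c*A p r + b*c*A q r) := by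
  simp only [Matrix.mulVec_add, Matrix.mulVec_smul, add_dotProduct,
    smul_dotProduct, dotProduct_add, dotProduct_smul,
    dot_single, smul_eq_mul]
  rw [symm_apply hsymm p q, symm_apply hsymm p r, symm_apply hsymm q r,
    hdiag p, hdiag q, hdiag r]
  ring

lemma quad2 (A : Matrix V V ℝ) (hsymm : Aᵀ = A) (hdiag : ∀ i, A i i = 0)
    (i j : V) :
    (sbv i - sbv j) ⬝ᵥ A *ᵥ (sbv i - sbv j) = -(2 * A i j) := by
  simp only [Matrix.mulVec_sub, sub_dotProduct, dotProduct_sub, dot_single]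
  rw [symm_apply hsymm i j, hdiag i, hdiag j]
  ring

lemma sbv_dot_sbv (i j : V) : sbv i ⬝ᵥ sbv (V := V) j = if i = j then (1:ℝ) else 0 := by
  rw [sbv, sbv, single_dotProduct, one_mul]
  by_cases h : i = j
  · subst h; simp
  · simp [Pi.single_eq_of_ne (Ne.symm h), h]

lemma dot2_self (i j : V) (hij : i ≠ j) :
    (sbv i - sbv j) ⬝ᵥ (sbv i - sbv (V := V) j) = 2 := by
  simp only [sub_dotProduct, dotProduct_sub, sbv_dot_sbv]
  simp [hij, Ne.symm hij]
  norm_num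

lemma dot3_self (a b c : ℝ) (p q r : V) (hpq : p ≠ q) (hpr : p ≠ r) (hqr : q ≠ r) :
    (a • sbv p + b • sbv q + c • sbv r) ⬝ᵥ (a • sbv p + b • sbv q + c • sbv (V := V) r)
      = a^2 + b^2 + c^2 := by
  simp only [add_dotProduct, smul_dotProduct, dotProduct_add,
    dotProduct_smul, sbv_dot_sbv, smul_eq_mul]
  simp [hpq, hpr, hqr, Ne.symm hpq, Ne.symm hpr, Ne.symm hqr]
  ring

lemma sum_sbv (i : V) : ∑ k, sbv i k = 1 := by
  rw [sbv]; simp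

lemma sum2 (i j : V) : ∑ k, (sbv i - sbv j) k = 0 := by
  simp [Finset.sum_sub_distrib, sum_sbv, sbv]

lemma sum3 (a b c : ℝ) (p q r : V) :
    ∑ k, (a • sbv p + b • sbv q + c • sbv r) k = a + b + c := by
  simp [Finset.sum_add_distrib, sbv, ← Finset.mul_sum]

lemma dot_self_nonneg' (x : V → ℝ) : 0 ≤ x ⬝ᵥ x :=
  Finset.sum_nonneg fun i _ => mul_self_nonneg _

lemma smul_dot_smul (t : ℝ) (x y : V → ℝ) : (t • x) ⬝ᵥ (t • y) = t^2 * (x ⬝ᵥ y) := by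
  rw [smul_dotProduct, dotProduct_smul]
  simp [smul_eq_mul]; ring

lemma quad_smul (A : Matrix V V ℝ) (t : ℝ) (x : V → ℝ) :
    (t • x) ⬝ᵥ A *ᵥ (t • x) = t^2 * (x ⬝ᵥ A *ᵥ x) := by
  rw [Matrix.mulVec_smul, smul_dotProduct, dotProduct_smul]
  simp [smul_eq_mul]; ring

lemma sum_smul' (t : ℝ) (x : V → ℝ) : ∑ i, (t • x) i = t * ∑ i, x i := by
  simp [Finset.mul_sum]

lemma K_compact : IsCompact {x : V → ℝ | (∑ i, x i) = 0 ∧ x ⬝ᵥ x = 1} := by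
  apply Metric.isCompact_of_isClosed_isBounded
  · apply IsClosed.inter
    · exact isClosed_eq (by continuity) continuous_const
    · have : Continuous fun x : V → ℝ => x ⬝ᵥ x := by
        apply continuous_finset_sum
        intro i _
        exact (continuous_apply i).mul (continuous_apply i)
      exact isClosed_eq this continuous_const
  · rw [isBounded_iff_forall_norm_le]
    refine ⟨1, fun x hx => ?_⟩
    rw [pi_norm_le_iff_of_nonneg zero_le_one]
    intro i
    rw [Real.norm_eq_abs, abs_le_one_iff_mul_self_le_one]
    calc x i * x i ≤ ∑ j, x j * x j :=
          Finset.single_le_sum (fun j _ => mul_self_nonneg (x j)) (Finset.mem_univ i)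
    _ = 1 := hx.2

lemma Q_continuous (A : Matrix V V ℝ) : Continuous fun x : V → ℝ => x ⬝ᵥ A *ᵥ x := by
  apply continuous_finset_sum
  intro i _
  exact (continuous_apply i).mul <| by
    apply continuous_finset_sum
    intro j _
    exact continuous_const.mul (continuous_apply j)

end Helpers

section Analysis
variable {V : Type*} [Fintype V] [DecidableEq V]

lemma analysis (G : SimpleGraph V) [DecidableRel G.Adj]
    (hnc : ¬∀ x y : V, x ≠ y → G.Adj x y)
    (hne : ¬∀ x y : V, ¬G.Adj x y) :
    ∃ (c : ℝ) (x₀ : V → ℝ), c ≠ 0 ∧ 0 < 2 + 2*c ∧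
      (∀ x : V → ℝ, (∑ i, x i) = 0 → c * (x ⬝ᵥ (G.adjMatrix ℝ) *ᵥ x) ≤ x ⬝ᵥ x) ∧
      (∑ i, x₀ i) = 0 ∧ x₀ ≠ 0 ∧
      c * (x₀ ⬝ᵥ (G.adjMatrix ℝ) *ᵥ x₀) = x₀ ⬝ᵥ x₀ := by
  classical
  set A := G.adjMatrix ℝ with hA
  have hsymm : Aᵀ = A := G.transpose_adjMatrix
  have hdiag : ∀ i, A i i = 0 := fun i => by simp [hA]
  set Q : (V → ℝ) → ℝ := fun x => x ⬝ᵥ A *ᵥ x with hQ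
  set K : Set (V → ℝ) := {x | (∑ i, x i) = 0 ∧ x ⬝ᵥ x = 1} with hK
  push_neg at hnc
  obtain ⟨u, v, huv, hnadj⟩ := hnc
  push_neg at hne
  obtain ⟨a, b, hab⟩ := hne
  -- K is nonempty
  have hKne : K.Nonempty := by
    refine ⟨(Real.sqrt 2)⁻¹ • (sbv u - sbv v), ?_, ?_⟩
    · rw [sum_smul', sum2, mul_zero]
    · rw [smul_dot_smul, dot2_self u v huv]
      rw [inv_pow, Real.sq_sqrt (by norm_num : (2:ℝ) ≥ 0)]
      norm_num
  -- homogeneity: scaling into K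
  have ext : ∀ x : V → ℝ, (∑ i, x i) = 0 → x ≠ 0 →
      ∃ y ∈ K, 0 < x ⬝ᵥ x ∧ Q x = (x ⬝ᵥ x) * Q y := by
    intro x hsum hx0
    have hpos : 0 < x ⬝ᵥ x := by
      rcases lt_or_eq_of_le (dot_self_nonneg' x) with h | h
      · exact h
      · exact absurd (dotProduct_self_eq_zero.mp h.symm) hx0
    set t : ℝ := (Real.sqrt (x ⬝ᵥ x))⁻¹ with ht
    have ht2 : t^2 = (x ⬝ᵥ x)⁻¹ := by
      rw [ht, inv_pow, Real.sq_sqrt (le_of_lt hpos)]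
    refine ⟨t • x, ⟨?_, ?_⟩, hpos, ?_⟩
    · rw [sum_smul', hsum, mul_zero]
    · rw [smul_dot_smul, ht2, inv_mul_cancel₀ (ne_of_gt hpos)]
    · rw [hQ]
      simp only []
      rw [quad_smul, ht2]
      field_simp
  obtain ⟨xM, hxM, hmax⟩ := K_compact.exists_isMaxOn hKne (Q_continuous A).continuousOn
  by_cases hcase : 0 < Q xM
  · -- use the maximum
    set μ := Q xM with hμ
    refine ⟨μ⁻¹, xM, inv_ne_zero (ne_of_gt hcase), by positivity, ?_, hxM.1, ?_, ?_⟩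
    · intro x hsum
      by_cases hx0 : x = 0
      · subst hx0
        simp [hQ]
      · obtain ⟨y, hy, hxx, hQx⟩ := ext x hsum hx0
        have h1 : μ⁻¹ * μ = 1 := inv_mul_cancel₀ (ne_of_gt hcase)
        calc μ⁻¹ * Q x = (x ⬝ᵥ x) * (μ⁻¹ * Q y) := by rw [hQx]; ring
          _ ≤ (x ⬝ᵥ x) * (μ⁻¹ * μ) := by
              apply mul_le_mul_of_nonneg_left
                (mul_le_mul_of_nonneg_left (hmax hy) (le_of_lt (inv_pos.mpr hcase)))
                (le_of_lt hxx)
          _ = x ⬝ᵥ x := by rw [h1, mul_one]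
    · intro h
      rw [h] at hxM
      have := hxM.2
      simp [zero_dotProduct] at this
    · rw [inv_mul_cancel₀ (ne_of_gt hcase), hxM.2]
  · -- maximum nonpositive: Q ≤ 0 on the hyperplane
    have hQle : ∀ x : V → ℝ, (∑ i, x i) = 0 → Q x ≤ 0 := by
      intro x hsum
      by_cases hx0 : x = 0
      · subst hx0; simp [hQ]
      · obtain ⟨y, hy, hxx, hQx⟩ := ext x hsum hx0
        have : Q y ≤ Q xM := hmax hy
        have h0 : Q y ≤ 0 := le_trans this (not_lt.mp hcase)
        rw [hQx]
        exact mul_nonpos_of_nonneg_of_nonpos (le_of_lt hxx) h0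
    -- non-adjacency is transitive
    have trans : ∀ x y z : V, x ≠ y → y ≠ z → x ≠ z →
        ¬G.Adj x y → ¬G.Adj y z → ¬G.Adj x z := by
      intro x y z hxy hyz hxz h1 h2 hadj
      have hsum : (∑ k, ((1:ℝ) • sbv x + (1:ℝ) • sbv z + (-2:ℝ) • sbv y) k) = 0 := by
        rw [sum3]; ring
      have hq := quad3 A hsymm hdiag 1 1 (-2) x z y
      have hAxz : A x z = 1 := by simp [hA, hadj]
      have hAxy : A x y = 0 := by simp [hA, h1]
      have hzy : ¬G.Adj z y := fun h => h2 h.symm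
      have hAzy : A z y = 0 := by simp [hA, hzy]
      have := hQle _ hsum
      rw [hQ] at this
      simp only [] at this
      rw [hq, hAxz, hAxy, hAzy] at this
      norm_num at this
    -- find r adjacent to both u and v
    have hrex : ∃ r : V, G.Adj r u ∧ G.Adj r v := by
      have hadj_u : G.Adj a u ∨ G.Adj b u := by
        by_contra hcon
        push_neg at hcon
        obtain ⟨hau, hbu⟩ := hcon
        by_cases h1 : a = u
        · exact hbu (h1 ▸ hab.symm)
        · by_cases h2 : b = u
          · exact hau (h2 ▸ hab)
          · exact trans a u b h1 (fun h => h2 h.symm) (G.ne_of_adj hab) hau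
              (fun h => hbu h.symm) hab
      have key : ∀ r : V, G.Adj r u → G.Adj r v := by
        intro r hru
        by_contra hnrv
        have hrv : r ≠ v := by
          intro h
          exact hnadj (h ▸ hru).symm
        exact trans r v u hrv (Ne.symm huv) (G.ne_of_adj hru) hnrv
          (fun h => hnadj h.symm) hru
      rcases hadj_u with h | h
      · exact ⟨a, h, key a h⟩
      · exact ⟨b, h, key b h⟩
    obtain ⟨r, hru, hrv⟩ := hrex
    have hurne : u ≠ r := Ne.symm (G.ne_of_adj hru)
    have hvrne : v ≠ r := Ne.symm (G.ne_of_adj hrv)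
    -- minimum
    obtain ⟨xm, hxm, hmin⟩ := K_compact.exists_isMinOn hKne (Q_continuous A).continuousOn
    set μ := Q xm with hμ
    have hμle : μ ≤ -(4/3) := by
      set z : V → ℝ := (1:ℝ) • sbv u + (1:ℝ) • sbv v + (-2:ℝ) • sbv r with hz
      have hzsum : (∑ k, z k) = 0 := by rw [hz, sum3]; ring
      have hzdot : z ⬝ᵥ z = 6 := by
        rw [hz, dot3_self 1 1 (-2) u v r huv hurne hvrne]; norm_num
      have hzQ : Q z = -8 := by
        rw [hQ]
        simp only []
        rw [hz, quad3 A hsymm hdiag 1 1 (-2) u v r]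
        have h1 : A u v = 0 := by simp [hA, hnadj]
        have h2 : A u r = 1 := by simp [hA, hru.symm]
        have h3 : A v r = 1 := by simp [hA, hrv.symm]
        rw [h1, h2, h3]; norm_num
      have hy : ((Real.sqrt 6)⁻¹ • z) ∈ K := by
        constructor
        · rw [sum_smul', hzsum, mul_zero]
        · rw [smul_dot_smul, hzdot, inv_pow, Real.sq_sqrt (by norm_num : (6:ℝ) ≥ 0)]
          norm_num
      have hQy : Q ((Real.sqrt 6)⁻¹ • z) = -(4/3) := by
        rw [hQ]
        simp only []
        rw [quad_smul, inv_pow, Real.sq_sqrt (by norm_num : (6:ℝ) ≥ 0)]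
        have : z ⬝ᵥ A *ᵥ z = -8 := hzQ
        rw [this]; norm_num
      have h2 : Q xm ≤ Q ((Real.sqrt 6)⁻¹ • z) := hmin hy
      rw [hQy] at h2
      exact h2
    have hμneg : μ < 0 := lt_of_le_of_lt hμle (by norm_num)
    refine ⟨μ⁻¹, xm, inv_ne_zero (ne_of_lt hμneg), ?_, ?_, hxm.1, ?_, ?_⟩
    · -- 0 < 2 + 2μ⁻¹
      have h1 : 2 + 2*μ⁻¹ = (2*μ + 2)/μ := by
        have hinv : μ⁻¹ * μ = 1 := inv_mul_cancel₀ (ne_of_lt hμneg)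
        rw [eq_div_iff (ne_of_lt hμneg)]
        linear_combination (2:ℝ) * hinv
      rw [h1]
      apply div_pos_of_neg_of_neg _ hμneg
      nlinarith
    · intro x hsum
      by_cases hx0 : x = 0
      · subst hx0; simp [hQ]
      · obtain ⟨y, hy, hxx, hQx⟩ := ext x hsum hx0
        have hyQ : μ ≤ Q y := hmin hy
        have h1 : μ⁻¹ * μ = 1 := inv_mul_cancel₀ (ne_of_lt hμneg)
        have h2 : μ⁻¹ * Q y ≤ μ⁻¹ * μ := by
          rw [mul_comm (μ⁻¹) (Q y), mul_comm (μ⁻¹) μ]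
          exact mul_le_mul_of_nonpos_right hyQ (le_of_lt (inv_neg''.mpr hμneg))
        calc μ⁻¹ * Q x = (x ⬝ᵥ x) * (μ⁻¹ * Q y) := by rw [hQx]; ring
          _ ≤ (x ⬝ᵥ x) * 1 := by
              apply mul_le_mul_of_nonneg_left (le_trans h2 (le_of_eq h1)) (le_of_lt hxx)
          _ = x ⬝ᵥ x := mul_one _
    · intro h
      rw [h] at hxm
      have := hxm.2
      simp [zero_dotProduct] at this
    · rw [inv_mul_cancel₀ (ne_of_lt hμneg), hxm.2]

end Analysis


section Gram
variable {V : Type*} [Fintype V] [DecidableEq V]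

-- assume analysis conclusion as hypotheses; plug in later
lemma gram (G : SimpleGraph V) [DecidableRel G.Adj] [Nonempty V]
    (c : ℝ) (x₀ : V → ℝ) (hc0 : c ≠ 0) (hcpos : 0 < 2 + 2*c)
    (hineq : ∀ x : V → ℝ, (∑ i, x i) = 0 → c * (x ⬝ᵥ (G.adjMatrix ℝ) *ᵥ x) ≤ x ⬝ᵥ x)
    (hx₀sum : (∑ i, x₀ i) = 0) (hx₀ne : x₀ ≠ 0)
    (hx₀eq : c * (x₀ ⬝ᵥ (G.adjMatrix ℝ) *ᵥ x₀) = x₀ ⬝ᵥ x₀) :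
    ∃ v : V → (V → ℝ),
      (∀ i j, (v i - v j) ⬝ᵥ (v i - v j) = 2 + 2*c*(G.adjMatrix ℝ i j) - 2*(if i = j then 1 else 0)) ∧
      Module.finrank ℝ (Submodule.span ℝ (Set.range v)) ≤ Fintype.card V - 2 := by
  classical
  set A := G.adjMatrix ℝ with hA
  have hsymm : Aᵀ = A := G.transpose_adjMatrix
  have hdiag : ∀ i, A i i = 0 := fun i => by simp [hA]
  set n := Fintype.card V with hn
  have hnpos : 0 < n := Fintype.card_pos
  have hnR : (n:ℝ) ≠ 0 := Nat.cast_ne_zero.mpr hnpos.ne'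
  set Jm : Matrix V V ℝ := Matrix.of (fun _ _ => (1:ℝ)) with hJm
  set P : Matrix V V ℝ := 1 - (n:ℝ)⁻¹ • Jm with hP
  set N : Matrix V V ℝ := 1 - c • A with hN
  set M : Matrix V V ℝ := Pᴴ * (N * P) with hM
  have ones_def : ∀ i : V, (fun _ : V => (1:ℝ)) i = 1 := fun _ => rfl
  -- F1
  have hPapp : ∀ x : V → ℝ, P *ᵥ x = x - ((n:ℝ)⁻¹ * ∑ i, x i) • (fun _ => (1:ℝ)) := by
    intro x
    funext i
    rw [hP, Matrix.sub_mulVec, Matrix.smul_mulVec, Matrix.one_mulVec]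
    simp [Matrix.mulVec, dotProduct, hJm, Finset.mul_sum]
  -- F3
  have hPfix : ∀ x : V → ℝ, (∑ i, x i) = 0 → P *ᵥ x = x := by
    intro x hx
    rw [hPapp, hx, mul_zero, zero_smul, sub_zero]
  -- F2
  have hPsum : ∀ x : V → ℝ, (∑ i, (P *ᵥ x) i) = 0 := by
    intro x
    rw [hPapp]
    simp only [Pi.sub_apply, Pi.smul_apply, smul_eq_mul, mul_one]
    rw [Finset.sum_sub_distrib]
    simp [← hn]
    field_simp
    ring
  -- F4
  have hquad : ∀ x : V → ℝ, x ⬝ᵥ M *ᵥ x = (P *ᵥ x) ⬝ᵥ N *ᵥ (P *ᵥ x) := by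
    intro x
    rw [hM, ← Matrix.mulVec_mulVec, Matrix.dotProduct_mulVec, Matrix.vecMul_conjTranspose]
    simp only [star_trivial]
    rw [← Matrix.mulVec_mulVec]
  -- F5
  have hNform : ∀ y : V → ℝ, y ⬝ᵥ N *ᵥ y = y ⬝ᵥ y - c * (y ⬝ᵥ A *ᵥ y) := by
    intro y
    rw [hN, Matrix.sub_mulVec, Matrix.smul_mulVec, Matrix.one_mulVec,
      dotProduct_sub, dotProduct_smul]
    simp [smul_eq_mul]
  -- M is PSD
  have hMpsd : M.PosSemidef := by
    refine Matrix.posSemidef_iff_dotProduct_mulVec.mpr ⟨?_, ?_⟩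
    · -- Hermitian
      have hJT : Jmᵀ = Jm := by funext i j; rfl
      have hPsymmH : Pᴴ = P := by
        rw [hP, Matrix.conjTranspose_eq_transpose_of_trivial, Matrix.transpose_sub,
          Matrix.transpose_one, Matrix.transpose_smul, hJT]
      have hNH : Nᴴ = N := by
        rw [hN, Matrix.conjTranspose_eq_transpose_of_trivial, Matrix.transpose_sub,
          Matrix.transpose_one, Matrix.transpose_smul, hsymm]
      rw [hM, Matrix.IsHermitian, Matrix.conjTranspose_mul, Matrix.conjTranspose_mul, hNH,
        Matrix.conjTranspose_conjTranspose, hPsymmH, Matrix.mul_assoc]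
    · intro x
      simp only [star_trivial]
      rw [hquad, hNform]
      have := hineq (P *ᵥ x) (hPsum x)
      linarith
  obtain ⟨C, hC⟩ : ∃ C : Matrix V V ℝ, M = Cᴴ * C := by
    open scoped MatrixOrder in exact CStarAlgebra.nonneg_iff_eq_star_mul_self.mp hMpsd.nonneg
  have hCquad : ∀ x : V → ℝ, (C *ᵥ x) ⬝ᵥ (C *ᵥ x) = x ⬝ᵥ M *ᵥ x := by
    intro x
    conv_rhs => rw [hC, ← Matrix.mulVec_mulVec, Matrix.dotProduct_mulVec,
      Matrix.vecMul_conjTranspose]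
    simp only [star_trivial]
  set v : V → (V → ℝ) := fun i => C *ᵥ sbv i with hv
  refine ⟨v, ?_, ?_⟩
  · intro i j
    by_cases hij : i = j
    · subst hij
      simp [hdiag i]
    · have hδ : v i - v j = C *ᵥ (sbv i - sbv j) := by
        rw [hv]
        simp only []
        rw [Matrix.mulVec_sub]
      rw [hδ, hCquad, hquad, hPfix _ (sum2 i j), hNform, dot2_self i j hij,
        quad2 A hsymm hdiag i j]
      simp [hij]
      ring
  · have hkerC : ∀ x : V → ℝ, x ⬝ᵥ M *ᵥ x = 0 → C *ᵥ x = 0 := by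
      intro x hx
      have h := hCquad x
      rw [hx] at h
      exact dotProduct_self_eq_zero.mp h
    have hker1 : C *ᵥ (fun _ => (1:ℝ)) = 0 := by
      apply hkerC
      rw [hquad]
      have hP1 : P *ᵥ (fun _ => (1:ℝ)) = 0 := by
        rw [hPapp]
        funext i
        simp [← hn, inv_mul_cancel₀ hnR]
      rw [hP1]
      simp
    have hker2 : C *ᵥ x₀ = 0 := by
      apply hkerC
      rw [hquad, hPfix x₀ hx₀sum, hNform]
      linarith [hx₀eq]
    have hspan : Submodule.span ℝ (Set.range v) ≤ LinearMap.range C.mulVecLin := by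
      rw [Submodule.span_le]
      rintro _ ⟨i, rfl⟩
      exact ⟨sbv i, rfl⟩
    have hli : LinearIndependent ℝ ![(fun _ => (1:ℝ)), x₀] := by
      rw [linearIndependent_fin2]
      constructor
      · simpa using hx₀ne
      · intro a ha
        have hsum := congrArg (fun y : V → ℝ => ∑ i, y i) ha
        simp only [Matrix.cons_val_one, Matrix.head_cons, Matrix.cons_val_zero, Pi.smul_apply,
          smul_eq_mul] at hsum
        rw [← Finset.mul_sum, hx₀sum, mul_zero] at hsum
        rw [Finset.sum_const, Finset.card_univ, ← hn] at hsum
        simp at hsum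
        exact hnR (by exact_mod_cast hsum.symm)
    have hker_le : Submodule.span ℝ (Set.range ![(fun _ => (1:ℝ)), x₀])
        ≤ LinearMap.ker C.mulVecLin := by
      rw [Submodule.span_le]
      rintro _ ⟨k, rfl⟩
      fin_cases k
      · simpa [Matrix.mulVecLin_apply] using hker1
      · simpa [Matrix.mulVecLin_apply] using hker2
    have h2 : 2 ≤ Module.finrank ℝ (LinearMap.ker C.mulVecLin) := by
      have hcard := finrank_span_eq_card hli
      have := Submodule.finrank_mono hker_le
      rw [hcard] at this
      simpa using this
    have hrn := LinearMap.finrank_range_add_finrank_ker C.mulVecLin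
    have hpi : Module.finrank ℝ (V → ℝ) = n := by
      rw [Module.finrank_pi]
    have hfr : Module.finrank ℝ (Submodule.span ℝ (Set.range v))
        ≤ Module.finrank ℝ (LinearMap.range C.mulVecLin) := Submodule.finrank_mono hspan
    omega
end Gram


section Embed

-- sum padding helper
lemma sum_pad {d m : ℕ} (hdm : d ≤ m) (F : Fin d → ℝ) :
    ∑ k : Fin m, (if h : (k:ℕ) < d then F ⟨k,h⟩ else 0) = ∑ k : Fin d, F k := by
  set F' : ℕ → ℝ := fun k => if h : k < d then F ⟨k,h⟩ else 0 with hF'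
  have h1 : ∑ k : Fin m, (if h : (k:ℕ) < d then F ⟨k,h⟩ else 0) = ∑ k ∈ Finset.range m, F' k := by
    rw [Finset.sum_range fun k => F' k]
  rw [h1]
  have h2 : ∑ k ∈ Finset.range m, F' k = ∑ k ∈ Finset.range d, F' k := by
    refine (Finset.sum_subset (Finset.range_subset_range.2 hdm) ?_).symm
    intro x _ hx
    simp only [Finset.mem_range, not_lt] at hx
    simp [hF', Nat.not_lt.2 hx]
  rw [h2, Finset.sum_range fun k => F' k]
  apply Finset.sum_congr rfl
  intro k _
  simp [hF', k.isLt]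

-- embedding lemma
lemma embed {ι : Type*} [Fintype ι] {κ : Type*} [Fintype κ] (m : ℕ)
    (v : ι → EuclideanSpace ℝ κ)
    (h : Module.finrank ℝ (Submodule.span ℝ (Set.range v)) ≤ m) :
    ∃ f : ι → EuclideanSpace ℝ (Fin m), ∀ i j, dist (f i) (f j) = dist (v i) (v j) := by
  set S := Submodule.span ℝ (Set.range v) with hS
  set d := Module.finrank ℝ S with hd
  have B := stdOrthonormalBasis ℝ S
  have hmem : ∀ i, v i ∈ S := fun i => Submodule.subset_span (Set.mem_range_self i)
  set g : ι → EuclideanSpace ℝ (Fin d) := fun i => B.repr ⟨v i, hmem i⟩ with hg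
  have hgd : ∀ i j, dist (g i) (g j) = dist (v i) (v j) := by
    intro i j
    rw [hg]
    simp only []
    rw [B.repr.dist_map]
    exact Subtype.dist_eq _ _
  refine ⟨fun i => WithLp.toLp 2 (fun k : Fin m => if h : (k:ℕ) < d then g i ⟨k,h⟩ else 0), ?_⟩
  intro i j
  rw [← hgd i j]
  rw [EuclideanSpace.dist_eq, EuclideanSpace.dist_eq]
  congr 1
  have := sum_pad (d := d) (m := m) h (fun k => dist (g i k) (g j k)^2)
  rw [← this]
  apply Finset.sum_congr rfl
  intro k _
  by_cases hk : (k:ℕ) < d <;> simp [hk]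

end Embed

theorem stmt_13 {V : Type*} [Fintype V] (G : SimpleGraph V)
    (hnc : ¬∀ x y : V, x ≠ y → G.Adj x y)
    (hne : ¬∀ x y : V, ¬G.Adj x y) :
    ∃ f : V → EuclideanSpace ℝ (Fin (Fintype.card V - 2)),
      ∀ x x' y y' : V, x ≠ x' → y ≠ y' →
        (dist (f x) (f x') = dist (f y) (f y') ↔ (G.Adj x x' ↔ G.Adj y y')) := by
  classical
  have hne2 := hne
  push_neg at hne2
  obtain ⟨a0, b0, hab0⟩ := hne2
  haveI : Nonempty V := ⟨a0⟩
  obtain ⟨c, x₀, hc0, hcpos, hineq, hx₀sum, hx₀ne, hx₀eq⟩ := analysis G hnc hne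
  obtain ⟨v, hvdist, hvrank⟩ := gram G c x₀ hc0 hcpos hineq hx₀sum hx₀ne hx₀eq
  set ψ := (WithLp.linearEquiv 2 ℝ (V → ℝ)).symm with hψ
  set w : V → EuclideanSpace ℝ V := fun i => ψ (v i) with hw
  have happly : ∀ i k, w i k = v i k := fun i k => rfl
  have hwdist : ∀ i j, i ≠ j →
      dist (w i) (w j) = Real.sqrt (if G.Adj i j then 2 + 2*c else 2) := by
    intro i j hij
    rw [EuclideanSpace.dist_eq]
    congr 1
    have h1 : ∑ k, dist (w i k) (w j k) ^ 2 = (v i - v j) ⬝ᵥ (v i - v j) := by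
      apply Finset.sum_congr rfl
      intro k _
      rw [happly, happly, Real.dist_eq, sq_abs]
      simp [dotProduct]
      ring
    rw [h1, hvdist i j, if_neg hij]
    by_cases hadj : G.Adj i j <;> simp [hadj]
  have hwrank : Module.finrank ℝ (Submodule.span ℝ (Set.range w)) ≤ Fintype.card V - 2 := by
    have heq : Submodule.span ℝ (Set.range w)
        = Submodule.map (ψ : (V → ℝ) →ₗ[ℝ] EuclideanSpace ℝ V)
            (Submodule.span ℝ (Set.range v)) := by
      rw [Submodule.map_span]
      congr 1
      rw [hw, LinearEquiv.coe_coe]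
      exact Set.range_comp _ v
    rw [heq, LinearEquiv.finrank_map_eq]
    exact hvrank
  obtain ⟨f, hf⟩ := embed (Fintype.card V - 2) w hwrank
  have hsne : Real.sqrt (2 + 2*c) ≠ Real.sqrt 2 := by
    intro h
    rw [Real.sqrt_inj (le_of_lt hcpos) (by norm_num)] at h
    apply hc0
    linarith
  refine ⟨f, ?_⟩
  intro x x' y y' hxx hyy
  rw [hf, hf, hwdist x x' hxx, hwdist y y' hyy]
  have hsne' : Real.sqrt 2 ≠ Real.sqrt (2 + 2*c) := Ne.symm hsne
  by_cases h1 : G.Adj x x' <;> by_cases h2 : G.Adj y y' <;>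
    simp [h1, h2, hsne, hsne']
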